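/- Let D = A⊕B⊕C ⇒ B and D' = A'⊕B'⊕C' ⇒ B' be the VB-algebroids corresponding to 2-term representations up to homotopy (∂_V, ∇^V, K_V) of A on V = C[0]⊕B[1] and (∂_W, ∇^W, K_W) of A' on W = C'[0]⊕B'[1]. Let F: D → D' be the DVB morphism determined by bundle maps F_ver: A→A', F_hor: B→B', F_c: C→C' and Φ ∈ Ω¹(A; Hom(B,C')), i.e. F(a,b,c) = (F_ver(a), F_hor(b), F_c(c)+Φ_a(b)). Then the identity F*∘d_{D'} = d_D∘F* holds on C^∞(B') = Γ(∧⁰D'*_{B'}) if and only if the following hold: ρ_{A'}∘F_ver = ρ_A; F_hor∘∂_V = ∂_W∘F_c; and ∇^{Hom}_a F_hor = ∂_W∘Φ_a for all a ∈ Γ(A), where ∇^{Hom} is the A-connection on Hom(V,W) built from ∇^V and the pullback of ∇^W along F_ver. -/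
import Mathlib


/-!
Algebraic (Lie–Rinehart style) model of Lie algebroids and 2-term representations
up to homotopy.  The commutative ring `R` plays the role of the ring of smooth
functions `C^∞(M)` on the base, modules over `R` play the role of the modules of
sections of vector bundles over `M`, and `Derivation ℤ R R` plays the role of the
module of vector fields `Γ(TM)`.
-/

/-- A Lie algebroid over the base with function ring `R`, with module of sections `A`:
a Lie bracket on `A` together with an anchor map to vector fields (derivations of `R`),
satisfying the Leibniz rule. -/
structure LieAlgebroid (R : Type*) [CommRing R] (A : Type*) [AddCommGroup A] [Module R A] :
    Type _ where
  bracket : A → A → A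
  anchor : A →ₗ[R] Derivation ℤ R R
  bracket_add_left : ∀ a b c, bracket (a + b) c = bracket a c + bracket b c
  bracket_add_right : ∀ a b c, bracket a (b + c) = bracket a b + bracket a c
  bracket_skew : ∀ a b, bracket a b = - bracket b a
  bracket_jacobi : ∀ a b c,
    bracket a (bracket b c) = bracket (bracket a b) c + bracket b (bracket a c)
  bracket_smul : ∀ a (f : R) b, bracket a (f • b) = f • bracket a b + anchor a f • b
  anchor_bracket : ∀ a b, anchor (bracket a b) = ⁅anchor a, anchor b⁆

/-- An `A`-connection on the module (of sections) `V`, for a Lie algebroid `A`. -/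
structure Connection (R : Type*) [CommRing R] {A : Type*} [AddCommGroup A] [Module R A]
    (L : LieAlgebroid R A) (V : Type*) [AddCommGroup V] [Module R V] : Type _ where
  conn : A → V → V
  conn_add_left : ∀ a b v, conn (a + b) v = conn a v + conn b v
  conn_smul_left : ∀ (f : R) a v, conn (f • a) v = f • conn a v
  conn_add_right : ∀ a v w, conn a (v + w) = conn a v + conn a w
  conn_leibniz : ∀ a (f : R) v, conn a (f • v) = f • conn a v + L.anchor a f • v

/-- The curvature of a connection. -/
def Connection.curv {R : Type*} [CommRing R] {A : Type*} [AddCommGroup A] [Module R A]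
    {L : LieAlgebroid R A} {V : Type*} [AddCommGroup V] [Module R V]
    (D : Connection R L V) (a b : A) (v : V) : V :=
  D.conn a (D.conn b v) - D.conn b (D.conn a v) - D.conn (L.bracket a b) v

/-- A 2-term representation up to homotopy of the Lie algebroid `A` on `V₀[0] ⊕ V₁[1]`,
given by its structure operators `(∂, ∇, K)`:  a bundle map `∂ : V₀ → V₁`, a pair of
`A`-connections compatible with `∂`, and a 2-form `K` with values in `Hom(V₁, V₀)` which
is `d_{∇^Hom}`-closed and controls both curvatures. -/
structure TwoTermRUTH (R : Type*) [CommRing R] {A : Type*} [AddCommGroup A] [Module R A]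
    (L : LieAlgebroid R A)
    (V0 V1 : Type*) [AddCommGroup V0] [Module R V0] [AddCommGroup V1] [Module R V1] :
    Type _ where
  d : V0 →ₗ[R] V1
  conn0 : Connection R L V0
  conn1 : Connection R L V1
  d_conn : ∀ a v, d (conn0.conn a v) = conn1.conn a (d v)
  K : A → A → (V1 →ₗ[R] V0)
  K_add_left : ∀ a b c, K (a + b) c = K a c + K b c
  K_smul_left : ∀ (f : R) a b, K (f • a) b = f • K a b
  K_skew : ∀ a b, K a b = - K b a
  curv0 : ∀ a b v, conn0.curv a b v = - K a b (d v)
  curv1 : ∀ a b w, conn1.curv a b w = - d (K a b w)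
  dK : ∀ a b c w,
      (conn0.conn a (K b c w) - K b c (conn1.conn a w))
    - (conn0.conn b (K a c w) - K a c (conn1.conn b w))
    + (conn0.conn c (K a b w) - K a b (conn1.conn c w))
    - K (L.bracket a b) c w + K (L.bracket a c) b w - K (L.bracket b c) a w = 0

/-- A morphism of 2-term representations up to homotopy over a (Lie algebroid) morphism
`T : A → A'` of the underlying Lie algebroids, i.e. a morphism `(A, V) ⇒ (A, T^! W)`:
it is given by components `(φ₀, φ₁, Φ)` satisfying the usual four equations, in which
the structure operators of `W` are pulled back along `T`. -/
structure RUTHHomOver {R : Type*} [CommRing R]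
    {A : Type*} [AddCommGroup A] [Module R A] {A' : Type*} [AddCommGroup A'] [Module R A']
    {L : LieAlgebroid R A} {L' : LieAlgebroid R A'}
    (T : A →ₗ[R] A')
    {V0 V1 : Type*} [AddCommGroup V0] [Module R V0] [AddCommGroup V1] [Module R V1]
    {W0 W1 : Type*} [AddCommGroup W0] [Module R W0] [AddCommGroup W1] [Module R W1]
    (V : TwoTermRUTH R L V0 V1) (W : TwoTermRUTH R L' W0 W1) : Type _ where
  φ0 : V0 →ₗ[R] W0
  φ1 : V1 →ₗ[R] W1
  Φ : A →ₗ[R] (V1 →ₗ[R] W0)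
  comm_d : ∀ v, φ1 (V.d v) = W.d (φ0 v)
  comm0 : ∀ a v, W.conn0.conn (T a) (φ0 v) - φ0 (V.conn0.conn a v) = Φ a (V.d v)
  comm1 : ∀ a w, W.conn1.conn (T a) (φ1 w) - φ1 (V.conn1.conn a w) = W.d (Φ a w)
  commK : ∀ a b w,
      (W.conn0.conn (T a) (Φ b w) - Φ b (V.conn1.conn a w))
    - (W.conn0.conn (T b) (Φ a w) - Φ a (V.conn1.conn b w))
    - Φ (L.bracket a b) w
    = φ0 (V.K a b w) - W.K (T a) (T b) (φ1 w)

/-- A morphism of Lie algebroids over the identity of the base. -/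
def IsLieAlgebroidHom {R : Type*} [CommRing R]
    {A : Type*} [AddCommGroup A] [Module R A] {A' : Type*} [AddCommGroup A'] [Module R A']
    (L : LieAlgebroid R A) (L' : LieAlgebroid R A') (T : A →ₗ[R] A') : Prop :=
  (∀ a, L'.anchor (T a) = L.anchor a) ∧
  (∀ a b, T (L.bracket a b) = L'.bracket (T a) (T b))

/-!
Model of a morphism of decomposed VB-algebroids.

Let `D = A ⊕ B ⊕ C ⇒ B` and `D' = A' ⊕ B' ⊕ C' ⇒ B'` be the VB-algebroids
corresponding to 2-term representations up to homotopy `V` of `A` on `C[0] ⊕ B[1]` and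
`W` of `A'` on `C'[0] ⊕ B'[1]`, and let `F : D → D'` be the DVB morphism determined by
bundle maps `F_ver : A → A'`, `F_hor : B → B'`, `F_c : C → C'` and
`Φ ∈ Ω¹(A; Hom(B, C'))`, i.e. `F(a, b, c) = (F_ver a, F_hor b, F_c c + Φ_a b)`.

* Functions on the total spaces of `B` and `B'` of fiberwise degree ≤ 1 are modelled by
  `R × Bd` and `R × B'd` (`(f, ψ) ↔ f ∘ q_B + ℓ_ψ`), where `Bd, B'd` model `Γ(B^*)`,
  `Γ(B'^*)`; the pullback `F^*` in degree 0 is `(f, β) ↦ (f, F_hor^* β)`.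
* Sections of the horizontal duals `D^*_B`, `D'^*_{B'}` are modelled by triples
  `(Q, γ, ψ) ∈ Γ(A^* ⊗ B^*) ⊕ Γ(C^*) ⊕ Γ(A^*)` (linear part + core part); the pullback
  `F^*` in degree 1 is given by Lemma "dual_morf":
  `F^* ψ̂ = (F_ver^* ψ)^` and `F^*(Q, γ) = (F_ver^* ⊗ F_hor^*(Q) + ⟨Φ, γ⟩, F_c^* γ)`.
* The Lie algebroid differentials `d_D`, `d_{D'}` in degree 0 are given by
  `d_D(f ∘ q_B) = q_A^{D*}(d_A f)` and `d_D(ℓ_ψ) = (d_{∇^*}ψ, ∂^*ψ)`.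
-/

section MorphModel

variable {R : Type*} [CommRing R]
variable {A B Cc A' B' Cc' : Type*}
variable [AddCommGroup A] [Module R A] [AddCommGroup B] [Module R B]
variable [AddCommGroup Cc] [Module R Cc]
variable [AddCommGroup A'] [Module R A'] [AddCommGroup B'] [Module R B']
variable [AddCommGroup Cc'] [Module R Cc']
variable {Bd Cd Ad B'd C'd A'd : Type*}
variable [AddCommGroup Bd] [Module R Bd] [AddCommGroup Cd] [Module R Cd]
variable [AddCommGroup Ad] [Module R Ad]
variable [AddCommGroup B'd] [Module R B'd] [AddCommGroup C'd] [Module R C'd]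
variable [AddCommGroup A'd] [Module R A'd]

/-!
STATEMENT 6.  The identity `F^* ∘ d_{D'} = d_D ∘ F^*` holds on
`C^∞(B') = Γ(∧⁰ D'^*_{B'})` if and only if `ρ_{A'} ∘ F_ver = ρ_A`,
`F_hor ∘ ∂_V = ∂_W ∘ F_c`, and `∇^{Hom}_a F_hor = ∂_W ∘ Φ_a` for all `a ∈ Γ(A)`, where
`∇^{Hom}` is the `A`-connection on `Hom(V, W)` built from `∇^V` and the pullback of
`∇^W` along `F_ver`.
-/
theorem Fpull_dD_comm_on_functions_iff
    (L : LieAlgebroid R A) (L' : LieAlgebroid R A')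
    (V : TwoTermRUTH R L Cc B) (W : TwoTermRUTH R L' Cc' B')
    -- the components of the DVB morphism `F`
    (Fver : A →ₗ[R] A') (Fhor : B →ₗ[R] B') (Fc : Cc →ₗ[R] Cc')
    (Phi : A →ₗ[R] B →ₗ[R] Cc')
    -- duality pairings (nondegenerate)
    (pB : Bd →ₗ[R] B →ₗ[R] R) (pC : Cd →ₗ[R] Cc →ₗ[R] R) (pA : Ad →ₗ[R] A →ₗ[R] R)
    (pB' : B'd →ₗ[R] B' →ₗ[R] R) (pC' : C'd →ₗ[R] Cc' →ₗ[R] R)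
    (pA' : A'd →ₗ[R] A' →ₗ[R] R)
    (sepBd : ∀ ψ χ : Bd, (∀ b, pB ψ b = pB χ b) → ψ = χ)
    (sepCd : ∀ γ δ : Cd, (∀ c, pC γ c = pC δ c) → γ = δ)
    (sepAd : ∀ ψ χ : Ad, (∀ a, pA ψ a = pA χ a) → ψ = χ)
    (sepB' : ∀ b₁ b₂ : B', (∀ β, pB' β b₁ = pB' β b₂) → b₁ = b₂)
    (sepC' : ∀ c₁ c₂ : Cc', (∀ γ, pC' γ c₁ = pC' γ c₂) → c₁ = c₂)
    -- duals of the structure maps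
    (c1s : A → Bd → Bd)
    (hc1s : ∀ a ψ b, pB (c1s a ψ) b = L.anchor a (pB ψ b) - pB ψ (V.conn1.conn a b))
    (c1s' : A' → B'd → B'd)
    (hc1s' : ∀ a' β b',
        pB' (c1s' a' β) b' = L'.anchor a' (pB' β b') - pB' β (W.conn1.conn a' b'))
    (Vdd : Bd →ₗ[R] Cd) (hVdd : ∀ ψ c, pC (Vdd ψ) c = pB ψ (V.d c))
    (Wdd : B'd →ₗ[R] C'd) (hWdd : ∀ β c', pC' (Wdd β) c' = pB' β (W.d c'))
    (dA0 : R → Ad) (hdA0 : ∀ f a, pA (dA0 f) a = L.anchor a f)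
    (dA0' : R → A'd) (hdA0' : ∀ f a', pA' (dA0' f) a' = L'.anchor a' f)
    -- duals of the components of `F`
    (Fhd : B'd →ₗ[R] Bd) (hFhd : ∀ β b, pB (Fhd β) b = pB' β (Fhor b))
    (Fcd : C'd →ₗ[R] Cd) (hFcd : ∀ γ c, pC (Fcd γ) c = pC' γ (Fc c))
    (Fvd : A'd →ₗ[R] Ad) (hFvd : ∀ ψ a, pA (Fvd ψ) a = pA' ψ (Fver a))
    (Phid : C'd → A → Bd) (hPhid : ∀ γ a b, pB (Phid γ a) b = pC' γ (Phi a b))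
    -- the Lie algebroid differentials in degree 0, with values the triples
    -- `(Q, γ, ψ) ∈ Γ(A^* ⊗ B^*) ⊕ Γ(C^*) ⊕ Γ(A^*)` of sections of the horizontal dual
    (dD0 : R × Bd → (A → Bd) × Cd × Ad)
    (hdD0 : ∀ f ψ, dD0 (f, ψ) = (fun a => c1s a ψ, Vdd ψ, dA0 f))
    (dD0' : R × B'd → (A' → B'd) × C'd × A'd)
    (hdD0' : ∀ f β, dD0' (f, β) = (fun a' => c1s' a' β, Wdd β, dA0' f)) :
    -- `F^* ∘ d_{D'} = d_D ∘ F^*` on functions …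
    (∀ g : R × B'd,
        (fun a => Fhd ((dD0' g).1 (Fver a)) + Phid (dD0' g).2.1 a,
          Fcd (dD0' g).2.1, Fvd (dD0' g).2.2)
        = dD0 (g.1, Fhd g.2)) ↔
    -- … iff `ρ_{A'} ∘ F_ver = ρ_A`, `F_hor ∘ ∂_V = ∂_W ∘ F_c`, and
    -- `∇^{Hom}_a F_hor = ∂_W ∘ Φ_a`:
    ((∀ a, L'.anchor (Fver a) = L.anchor a) ∧
     (∀ c, Fhor (V.d c) = W.d (Fc c)) ∧
     (∀ a b, W.conn1.conn (Fver a) (Fhor b) - Fhor (V.conn1.conn a b) = W.d (Phi a b))) := by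
  constructor
  · intro H
    have hanchor : ∀ a, L'.anchor (Fver a) = L.anchor a := by
      intro a
      ext f
      have h3 := H (f, 0)
      rw [hdD0', hdD0] at h3
      have h := congrArg (fun p => pA p.2.2 a) h3
      simp only at h
      rwa [hFvd, hdA0', hdA0] at h
    refine ⟨hanchor, ?_, ?_⟩
    · intro c
      apply sepB'
      intro β
      have h3 := H (0, β)
      rw [hdD0', hdD0] at h3
      have h := congrArg (fun p => pC p.2.1 c) h3
      simp only at h
      rw [hFcd, hWdd, hVdd, hFhd] at h
      exact h.symm
    · intro a b
      apply sepB'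
      intro β
      have h3 := H (0, β)
      rw [hdD0', hdD0] at h3
      have h := congrArg (fun p => pB (p.1 a) b) h3
      simp only at h
      rw [map_add, LinearMap.add_apply, hFhd, hPhid, hWdd, hc1s', hc1s,
        hFhd, hFhd, hanchor] at h
      rw [map_sub]
      linear_combination -h
  · rintro ⟨hanchor, hd, hc⟩
    intro g
    obtain ⟨f, β⟩ := g
    rw [hdD0', hdD0]
    refine Prod.ext ?_ (Prod.ext ?_ ?_)
    · funext a
      apply sepBd
      intro b
      rw [map_add, LinearMap.add_apply, hFhd, hPhid, hWdd, hc1s', hc1s,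
        hFhd, hFhd, hanchor]
      have := congrArg (pB' β) (hc a b)
      rw [map_sub] at this
      simp only at *
      linear_combination -this
    · apply sepCd
      intro c
      rw [hFcd, hWdd, hVdd, hFhd, hd]
    · apply sepAd
      intro a
      rw [hFvd, hdA0', hdA0, hanchor]
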